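/- Let T be a rooted tree and P the path on vertices 1,...,m. Then the graph T⧄P has queue number at most 3: there is a vertex ordering and a partition of the edges into 3 classes such that no two edges of the same class nest. Explicitly, order (A,i) < (B,j) first by path position i<j, then by depth |A|<|B|, then lexicographically on the index arrays A,B; and place vertical, horizontal, and diagonal edges each in their own queue. -/

import Mathlib

/-- Vertices of `T ⧄ P`: a tree node indexed by an integer array, together with
a path position. -/
abbrev TPv := List ℕ × ℕ

/-- The explicit vertex ordering on `T ⧄ P`: compare first by path position,
then by depth, then lexicographically on the index arrays. -/
def vOrd (p q : TPv) : Prop :=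
  p.2 < q.2 ∨ (p.2 = q.2 ∧ (p.1.length < q.1.length ∨
    (p.1.length = q.1.length ∧ List.Lex (· < ·) p.1 q.1)))

/-- `x` lies strictly between `a` and `b` in the ordering. -/
def vBetween (x a b : TPv) : Prop := (vOrd a x ∧ vOrd x b) ∨ (vOrd b x ∧ vOrd x a)

/-- Edges `{a,b}` and `{c,d}` nest: one edge's endpoints both lie strictly
between the other edge's endpoints. -/
def Nests (a b c d : TPv) : Prop :=
  (vBetween c a b ∧ vBetween d a b) ∨ (vBetween a c d ∧ vBetween b c d)

lemma lex_app {A B : List ℕ} (h : List.Lex (· < ·) A B) :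
    A.length = B.length → ∀ v w : ℕ, List.Lex (· < ·) (A ++ [v]) (B ++ [w]) := by
  induction h with
  | nil => intro hl; simp at hl
  | rel h => intro _ v w; exact List.Lex.rel h
  | cons h ih => intro hl v w; exact List.Lex.cons (ih (by simpa using hl) v w)

lemma vOrd_trans {p q r : TPv} (h1 : vOrd p q) (h2 : vOrd q r) : vOrd p r := by
  unfold vOrd at *
  rcases h1 with h1 | ⟨e1, h1⟩
  · rcases h2 with h2 | ⟨e2, h2⟩
    · exact Or.inl (h1.trans h2)
    · exact Or.inl (e2 ▸ h1)
  · rcases h2 with h2 | ⟨e2, h2⟩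
    · exact Or.inl (e1 ▸ h2)
    · refine Or.inr ⟨e1.trans e2, ?_⟩
      rcases h1 with h1 | ⟨l1, h1⟩
      · rcases h2 with h2 | ⟨l2, h2⟩
        · exact Or.inl (h1.trans h2)
        · exact Or.inl (l2 ▸ h1)
      · rcases h2 with h2 | ⟨l2, h2⟩
        · exact Or.inl (l1 ▸ h2)
        · exact Or.inr ⟨l1.trans l2, List.lt_trans h1 h2⟩

lemma vOrd_irrefl (x : TPv) : ¬ vOrd x x := by
  unfold vOrd
  rintro (h | ⟨-, h | ⟨-, h⟩⟩)
  · omega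
  · omega
  · exact Std.Asymm.asymm _ _ h h

lemma between_of {a b x : TPv} (hab : vOrd a b) (hx : vBetween x a b) :
    vOrd a x ∧ vOrd x b := by
  rcases hx with ⟨h1, h2⟩ | ⟨h1, h2⟩
  · exact ⟨h1, h2⟩
  · exact absurd (vOrd_trans h2 (vOrd_trans hab h1)) (vOrd_irrefl x)

lemma vBetween_symm {x a b : TPv} (h : vBetween x a b) : vBetween x b a := by
  unfold vBetween at *; tauto

lemma case1 (A B : List ℕ) (v w i j : ℕ)
    (h1 : vOrd (A, i) (B, j)) (h2 : vOrd (B ++ [w], j) (A ++ [v], i)) : False := by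
  unfold vOrd at h1 h2
  simp only [List.length_append, List.length_singleton] at h1 h2
  rcases h1 with h1 | ⟨e1, h1 | ⟨l1, h1⟩⟩ <;>
    rcases h2 with h2 | ⟨e2, h2 | ⟨l2, h2⟩⟩ <;> try omega
  exact Std.Asymm.asymm _ _ (lex_app h1 (by omega) v w) h2

lemma case2 (A B : List ℕ) (i j : ℕ)
    (h1 : vOrd (A, i) (B, j)) (h2 : vOrd (B, j + 1) (A, i + 1)) : False := by
  unfold vOrd at h1 h2
  dsimp only at h1 h2
  rcases h1 with h1 | ⟨e1, h1 | ⟨l1, h1⟩⟩ <;>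
    rcases h2 with h2 | ⟨e2, h2 | ⟨l2, h2⟩⟩ <;> try omega
  exact Std.Asymm.asymm _ _ h1 h2

lemma case3 (A B : List ℕ) (v w i j : ℕ)
    (h1 : vOrd (A ++ [v], i) (B ++ [w], j)) (h2 : vOrd (B, j + 1) (A, i + 1)) : False := by
  unfold vOrd at h1 h2
  simp only [List.length_append, List.length_singleton] at h1 h2
  rcases h1 with h1 | ⟨e1, h1 | ⟨l1, h1⟩⟩ <;>
    rcases h2 with h2 | ⟨e2, h2 | ⟨l2, h2⟩⟩ <;> try omega
  exact Std.Asymm.asymm _ _ h1 (lex_app h2 (by omega) w v)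

/-- `T ⧄ P` has queue number at most 3: under the explicit ordering `vOrd`,
placing the vertical edges `(A+v,i) ∼ (A,i)`, the horizontal edges
`(A,i) ∼ (A,i+1)` and the diagonal edges `(A+v,i) ∼ (A,i+1)` each in their own
queue, no two edges of the same class (with no shared endpoints) nest. -/
theorem stmt16 :
    (∀ (A B : List ℕ) (v w i j : ℕ),
      (A ++ [v], i) ≠ ((B ++ [w], j) : TPv) → (A ++ [v], i) ≠ ((B, j) : TPv) →
      ((A, i) : TPv) ≠ (B ++ [w], j) → ((A, i) : TPv) ≠ (B, j) →
      ¬ Nests (A ++ [v], i) (A, i) (B ++ [w], j) (B, j)) ∧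
    (∀ (A B : List ℕ) (i j : ℕ),
      ((A, i) : TPv) ≠ (B, j) → ((A, i) : TPv) ≠ (B, j + 1) →
      ((A, i + 1) : TPv) ≠ (B, j) → ((A, i + 1) : TPv) ≠ (B, j + 1) →
      ¬ Nests (A, i) (A, i + 1) (B, j) (B, j + 1)) ∧
    (∀ (A B : List ℕ) (v w i j : ℕ),
      (A ++ [v], i) ≠ ((B ++ [w], j) : TPv) → (A ++ [v], i) ≠ ((B, j + 1) : TPv) →
      ((A, i + 1) : TPv) ≠ (B ++ [w], j) → ((A, i + 1) : TPv) ≠ (B, j + 1) →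
      ¬ Nests (A ++ [v], i) (A, i + 1) (B ++ [w], j) (B, j + 1)) := by
  refine ⟨?_, ?_, ?_⟩
  · rintro A B v w i j - - - - (⟨hc, hd⟩ | ⟨hc, hd⟩)
    · have hab : vOrd ((A, i) : TPv) (A ++ [v], i) := by
        simp [vOrd]
      obtain ⟨hc1, hc2⟩ := between_of hab (vBetween_symm hc)
      obtain ⟨hd1, hd2⟩ := between_of hab (vBetween_symm hd)
      exact case1 A B v w i j hd1 hc2
    · have hab : vOrd ((B, j) : TPv) (B ++ [w], j) := by
        simp [vOrd]
      obtain ⟨hc1, hc2⟩ := between_of hab (vBetween_symm hc)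
      obtain ⟨hd1, hd2⟩ := between_of hab (vBetween_symm hd)
      exact case1 B A w v j i hd1 hc2
  · rintro A B i j - - - - (⟨hc, hd⟩ | ⟨hc, hd⟩)
    · have hab : vOrd ((A, i) : TPv) (A, i + 1) := Or.inl (by omega)
      obtain ⟨hc1, hc2⟩ := between_of hab hc
      obtain ⟨hd1, hd2⟩ := between_of hab hd
      exact case2 A B i j hc1 hd2
    · have hab : vOrd ((B, j) : TPv) (B, j + 1) := Or.inl (by omega)
      obtain ⟨hc1, hc2⟩ := between_of hab hc
      obtain ⟨hd1, hd2⟩ := between_of hab hd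
      exact case2 B A j i hc1 hd2
  · rintro A B v w i j - - - - (⟨hc, hd⟩ | ⟨hc, hd⟩)
    · have hab : vOrd ((A ++ [v], i) : TPv) (A, i + 1) := Or.inl (by omega)
      obtain ⟨hc1, hc2⟩ := between_of hab hc
      obtain ⟨hd1, hd2⟩ := between_of hab hd
      exact case3 A B v w i j hc1 hd2
    · have hab : vOrd ((B ++ [w], j) : TPv) (B, j + 1) := Or.inl (by omega)
      obtain ⟨hc1, hc2⟩ := between_of hab hc
      obtain ⟨hd1, hd2⟩ := between_of hab hd
      exact case3 B A w v j i hc1 hd2
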